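/- There exists a dynamical system (X,f) such that ω(x) is a single fixed point for every x ∈ X, yet (X,f) is not a factor of any finite automaton. Concretely, let M ⊆ ℕ be a set of positive integers such that the unary language {0^m : m ∈ M} is not regular, and let X = {u ∈ {0,1,2}^ℤ : u is nondecreasing (i < j ⟹ u_i ≤ u_j), and whenever the block 0 1^m 2 occurs as a consecutive substring of u then m ∈ M}, with the shift σ(u)_i = u_{i+1}. Then X is a closed shift-invariant subset of {0,1,2}^ℤ, for every x ∈ X the ω-limit set ω(x) is one of the fixed points (the constant sequences of 0's, 1's, or 2's), and (X,σ) is not clopen-regular; in particular (X,σ) is not a factor of any finite automaton. -/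

import Mathlib

open Set Function Topology

/-- The ω-limit set of a set `A` under `f`: `ω(A) = ⋂ₙ closure (⋃_{m>n} f^m(A))`. -/
def omegaSet {X : Type*} [TopologicalSpace X] (f : X → X) (A : Set X) : Set X :=
  ⋂ n : ℕ, closure (⋃ m : ℕ, ⋃ _ : n < m, f^[m] '' A)

/-- A dynamical system is chaotic if its periodic points are dense and it is
topologically transitive. -/
def IsChaotic {X : Type*} [TopologicalSpace X] (f : X → X) : Prop :=
  Dense {x : X | ∃ n : ℕ, 0 < n ∧ f^[n] x = x} ∧
  ∀ U V : Set X, IsOpen U → IsOpen V → U.Nonempty → V.Nonempty →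
    ∃ k : ℕ, 0 < k ∧ (f^[k] '' U ∩ V).Nonempty

/-- `f` restricted to the invariant set `S` is a chaotic dynamical system. -/
def ChaoticOn {X : Type*} [TopologicalSpace X] (f : X → X) (S : Set X) : Prop :=
  ∃ h : MapsTo f S S, IsChaotic (MapsTo.restrict f S S h)

/-- A system has chaotic limits if every point belongs to a set whose ω-limit set is
a chaotic system. -/
def HasChaoticLimits {X : Type*} [TopologicalSpace X] (f : X → X) : Prop :=
  ∀ x : X, ∃ A : Set X, x ∈ A ∧ ChaoticOn f (omegaSet f A)
/-- The discontinuum over `A, Q, B`: two-sided sequences with letters from `A` at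
positive coordinates, a letter from `Q` at coordinate `0`, and letters from `B` at
negative coordinates. -/
def Discontinuum (A Q B : Type*) : Type _ :=
  {u : ℤ → A ⊕ Q ⊕ B //
    (∀ i : ℤ, 0 < i → ∃ a : A, u i = Sum.inl a) ∧
    (∃ q : Q, u 0 = Sum.inr (Sum.inl q)) ∧
    (∀ i : ℤ, i < 0 → ∃ b : B, u i = Sum.inr (Sum.inr b))}

/-- The topology of the discontinuum: the product topology of the discrete topologies,
i.e. the topology of the metric ρ(u,v) = 2^{-inf{i ≥ 0 : uᵢ ≠ vᵢ or u₋ᵢ ≠ v₋ᵢ}}. -/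
instance (A Q B : Type*) : TopologicalSpace (Discontinuum A Q B) := by
  letI : TopologicalSpace (A ⊕ Q ⊕ B) := ⊥
  unfold Discontinuum
  infer_instance

/-- The inner state of the automaton, i.e. the coordinate `u 0`. -/
noncomputable def Discontinuum.state {A Q B : Type*} (u : Discontinuum A Q B) : Q :=
  u.2.2.1.choose

/-- The next input symbol, i.e. the coordinate `u 1`. -/
noncomputable def Discontinuum.input {A Q B : Type*} (u : Discontinuum A Q B) : A :=
  (u.2.1 1 one_pos).choose

/-- The dynamical system of a finite automaton with input function `fA` and output
function `fB`: it reads a symbol from the input tape, changes its state, and writes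
a symbol to the output tape. -/
noncomputable def autMap {A Q B : Type*} (fA : Q × A → Q) (fB : Q → B)
    (u : Discontinuum A Q B) : Discontinuum A Q B :=
  ⟨fun i =>
    if i = -1 then Sum.inr (Sum.inr (fB u.state))
    else if i = 0 then Sum.inr (Sum.inl (fA (u.state, u.input)))
    else u.1 (i + 1), by
      refine ⟨fun i hi => ?_, ?_, fun i hi => ?_⟩
      · beta_reduce
        rw [if_neg (by omega), if_neg (by omega)]
        exact u.2.1 (i + 1) (by omega)
      · exact ⟨fA (u.state, u.input), by beta_reduce; rw [if_neg (by norm_num), if_pos rfl]⟩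
      · by_cases h : i = -1
        · exact ⟨fB u.state, by beta_reduce; rw [if_pos h]⟩
        · beta_reduce
          rw [if_neg h, if_neg (by omega)]
          exact u.2.2.2 (i + 1) (by omega)⟩

/-- A dynamical system `g` is a factor of a finite automaton if there are nonempty
finite sets `A, Q, B`, input and output functions `fA, fB`, and a continuous
surjection `φ` from the corresponding finite automaton onto `(Y, g)` with
`g ∘ φ = φ ∘ f`. -/
def IsFactorOfFiniteAutomaton {Y : Type*} [TopologicalSpace Y] (g : Y → Y) : Prop :=
  ∃ (A Q B : Type) (_ : Fintype A) (_ : Fintype Q) (_ : Fintype B)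
    (_ : Nonempty A) (_ : Nonempty Q) (_ : Nonempty B)
    (fA : Q × A → Q) (fB : Q → B) (φ : Discontinuum A Q B → Y),
    Continuous φ ∧ Surjective φ ∧ g ∘ φ = φ ∘ autMap fA fB
/-- The language generated by a family `α` of subsets of `X`: all finite words
`u ∈ α*` such that some `x ∈ X` has itinerary `u`, i.e. `f^i(x) ∈ uᵢ` for `i < |u|`. -/
def genLanguage {X : Type*} (f : X → X) (α : Set (Set X)) : Language ↥α :=
  {w : List ↥α | ∃ x : X, ∀ i : Fin w.length, f^[(i : ℕ)] x ∈ (w.get i : Set X)}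

/-- A dynamical system is clopen-regular if the language generated by every finite
clopen cover is regular. -/
def ClopenRegular {X : Type*} [TopologicalSpace X] (f : X → X) : Prop :=
  ∀ α : Set (Set X), α.Finite → (∀ S ∈ α, IsClopen S) → ⋃₀ α = Set.univ →
    (genLanguage f α).IsRegular


set_option linter.unusedSectionVars false
set_option linter.unusedTactic false
set_option maxHeartbeats 1000000

section AuxShift

variable (M : Set ℕ)

def XX : Set (ℤ → Fin 3) := {u : ℤ → Fin 3 | (∀ i j : ℤ, i < j → u i ≤ u j) ∧
      ∀ (i : ℤ) (m : ℕ), u i = 0 → (∀ j : ℕ, 1 ≤ j → j ≤ m → u (i + (j : ℤ)) = 1) →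
        u (i + (m : ℤ) + 1) = 2 → m ∈ M}

lemma isClosed_XX : IsClosed (XX M) := by
  have h1 : IsClosed {u : ℤ → Fin 3 | ∀ i j : ℤ, i < j → u i ≤ u j} := by
    have : {u : ℤ → Fin 3 | ∀ i j : ℤ, i < j → u i ≤ u j}
        = ⋂ i : ℤ, ⋂ j : ℤ, ⋂ _ : i < j, {u : ℤ → Fin 3 | u i ≤ u j} := by
      ext u; simp
    rw [this]
    refine isClosed_iInter fun i => isClosed_iInter fun j => isClosed_iInter fun _ => ?_
    have : {u : ℤ → Fin 3 | u i ≤ u j}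
        = (fun u : ℤ → Fin 3 => (u i, u j)) ⁻¹' {p : Fin 3 × Fin 3 | p.1 ≤ p.2} := rfl
    rw [this]
    exact (isClosed_discrete {p : Fin 3 × Fin 3 | p.1 ≤ p.2}).preimage
      ((continuous_apply i).prodMk (continuous_apply j))
  have h2 : IsClosed {u : ℤ → Fin 3 |
      ∀ (i : ℤ) (m : ℕ), u i = 0 → (∀ j : ℕ, 1 ≤ j → j ≤ m → u (i + (j : ℤ)) = 1) →
        u (i + (m : ℤ) + 1) = 2 → m ∈ M} := by
    have : {u : ℤ → Fin 3 |
        ∀ (i : ℤ) (m : ℕ), u i = 0 → (∀ j : ℕ, 1 ≤ j → j ≤ m → u (i + (j : ℤ)) = 1) →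
          u (i + (m : ℤ) + 1) = 2 → m ∈ M}
        = ⋂ i : ℤ, ⋂ m : ℕ, {u : ℤ → Fin 3 |
            u i = 0 → (∀ j : ℕ, 1 ≤ j → j ≤ m → u (i + (j : ℤ)) = 1) →
            u (i + (m : ℤ) + 1) = 2 → m ∈ M} := by
      ext u; simp
    rw [this]
    refine isClosed_iInter fun i => isClosed_iInter fun m => ?_
    by_cases hm : m ∈ M
    · have : {u : ℤ → Fin 3 | u i = 0 → (∀ j : ℕ, 1 ≤ j → j ≤ m → u (i + (j : ℤ)) = 1) →
          u (i + (m : ℤ) + 1) = 2 → m ∈ M} = Set.univ := by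
        ext u; simp [hm]
      rw [this]; exact isClosed_univ
    · have : {u : ℤ → Fin 3 | u i = 0 → (∀ j : ℕ, 1 ≤ j → j ≤ m → u (i + (j : ℤ)) = 1) →
          u (i + (m : ℤ) + 1) = 2 → m ∈ M}
          = (((fun u : ℤ → Fin 3 => u i) ⁻¹' {0}
            ∩ ⋂ j : (Finset.Icc 1 m : Finset ℕ), (fun u : ℤ → Fin 3 => u (i + (j : ℤ))) ⁻¹' {1})
            ∩ (fun u : ℤ → Fin 3 => u (i + (m : ℤ) + 1)) ⁻¹' {2})ᶜ := by
        ext u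
        simp only [Set.mem_setOf_eq, Set.mem_compl_iff, Set.mem_inter_iff, Set.mem_iInter,
          Set.mem_preimage, Set.mem_singleton_iff, Finset.mem_Icc, Subtype.forall]
        constructor
        · intro h hbad
          exact hm (h hbad.1.1 (fun j h1 h2 => hbad.1.2 j ⟨h1, h2⟩) hbad.2)
        · intro h h0 h1 h2
          exact absurd ⟨⟨h0, fun j hj => h1 j hj.1 hj.2⟩, h2⟩ h
      rw [this]
      refine IsOpen.isClosed_compl (IsOpen.inter (IsOpen.inter ?_ ?_) ?_)
      · exact (isOpen_discrete _).preimage (continuous_apply i)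
      · exact isOpen_iInter_of_finite fun j =>
          (isOpen_discrete _).preimage (continuous_apply _)
      · exact (isOpen_discrete _).preimage (continuous_apply _)
  have : XX M = _ ∩ _ := Set.setOf_and
  rw [this]
  exact h1.inter h2

lemma mapsTo_XX : Set.MapsTo (fun (u : ℤ → Fin 3) (i : ℤ) => u (i + 1)) (XX M) (XX M) := by
  rintro u ⟨h1, h2⟩
  refine ⟨fun i j hij => h1 _ _ (by omega), fun i m hm0 hm1 hm2 => ?_⟩
  refine h2 (i + 1) m hm0 (fun j hj1 hj2 => ?_) ?_
  · have := hm1 j hj1 hj2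
    simpa [show i + (j : ℤ) + 1 = i + 1 + (j : ℤ) by ring] using this
  · simpa [show i + (m : ℤ) + 1 + 1 = i + 1 + (m : ℤ) + 1 by ring] using hm2

lemma const_mem_XX (c : Fin 3) : (fun _ => c) ∈ XX M := by
  refine ⟨fun i j _ => le_refl _, fun i m hm0 hm1 hm2 => ?_⟩
  simp only at hm0 hm2
  rw [hm0] at hm2
  exact absurd hm2 (by decide)

lemma step_mem_XX (hpos : ∀ k ∈ M, 0 < k) {m : ℕ} (hm : m ∈ M) :
    (fun j : ℤ => if j ≤ 0 then (0 : Fin 3) else if j ≤ (m : ℤ) then 1 else 2) ∈ XX M := by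
  set u := fun j : ℤ => if j ≤ 0 then (0 : Fin 3) else if j ≤ (m : ℤ) then 1 else 2 with hu
  have e0 : ∀ j, u j = 0 → j ≤ 0 := by
    intro j h
    by_contra hj
    rw [hu] at h; simp only at h
    rw [if_neg hj] at h
    split_ifs at h <;> exact absurd h (by decide)
  have e1 : ∀ j, u j = 1 → 0 < j ∧ j ≤ (m : ℤ) := by
    intro j h
    rw [hu] at h; simp only at h
    split_ifs at h with a b
    · exact absurd h (by decide)
    · exact ⟨by omega, b⟩
    · exact absurd h (by decide)
  have e2 : ∀ j, u j = 2 → (m : ℤ) < j := by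
    intro j h
    rw [hu] at h; simp only at h
    split_ifs at h with a b
    · exact absurd h (by decide)
    · exact absurd h (by decide)
    · omega
  refine ⟨fun i j hij => ?_, fun i m' h0 h1 h2 => ?_⟩
  · rw [hu]; simp only
    split_ifs <;> first | decide | (exfalso; omega)
  · have hi0 := e0 _ h0
    have him := e2 _ h2
    rcases Nat.eq_zero_or_pos m' with rfl | hm'
    · exfalso
      have := hpos m hm
      omega
    · have ha := e1 _ (h1 1 le_rfl hm')
      have hb := e1 _ (h1 m' hm' le_rfl)
      push_cast at ha hb him ⊢
      have : m' = m := by omega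
      exact this ▸ hm

lemma shift_iterate (x : ℤ → Fin 3) (n : ℕ) (i : ℤ) :
    (fun (u : ℤ → Fin 3) (i : ℤ) => u (i + 1))^[n] x i = x (i + n) := by
  induction n generalizing i with
  | zero => simp
  | succ n ih =>
    rw [Function.iterate_succ_apply']
    show (fun (u : ℤ → Fin 3) (i : ℤ) => u (i + 1))^[n] x (i + 1) = _
    rw [ih]; congr 1; push_cast; ring

lemma restrict_iterate {γ : Type*} (f : γ → γ) (s : Set γ) (h : Set.MapsTo f s s) (n : ℕ)
    (x : s) : ((Set.MapsTo.restrict f s s h)^[n] x : γ) = f^[n] (x : γ) := by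
  induction n with
  | zero => rfl
  | succ n ih =>
    rw [Function.iterate_succ_apply', Function.iterate_succ_apply',
      Set.MapsTo.val_restrict_apply, ih]

def SS (k : Fin 3) : Set ↥(XX M) := {x | (x : ℤ → Fin 3) 0 = k}

def alph : Set (Set ↥(XX M)) := Set.range (SS M)

def ltr (k : Fin 3) : ↥(alph M) := ⟨SS M k, ⟨k, rfl⟩⟩

def wrd (m : ℕ) : List ↥(alph M) := ltr M 0 :: (List.replicate m (ltr M 1) ++ [ltr M 2])

lemma wrd_length (m : ℕ) : (wrd M m).length = m + 2 := by simp [wrd]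

lemma wrd_get (m : ℕ) (i : ℕ) (hi : i < (wrd M m).length) :
    (wrd M m).get ⟨i, hi⟩ = if i = 0 then ltr M 0 else if i ≤ m then ltr M 1 else ltr M 2 := by
  rw [wrd_length] at hi
  rcases Nat.eq_zero_or_pos i with rfl | hpos
  · rfl
  · obtain ⟨j, rfl⟩ : ∃ j, i = j + 1 := ⟨i - 1, by omega⟩
    rw [List.get_eq_getElem]
    show (ltr M 0 :: (List.replicate m (ltr M 1) ++ [ltr M 2]))[j + 1] = _
    refine (List.getElem_cons_succ _ _ j (by simp; omega)).trans ?_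
    rcases Nat.lt_or_ge j m with hj | hj
    · rw [List.getElem_append_left (by simpa using hj), List.getElem_replicate]
      rw [if_neg (by omega), if_pos (by omega)]
    · have hjm : j = m := by omega
      subst hjm
      rw [List.getElem_append_right (by simp)]
      simp only [List.length_replicate, Nat.sub_self, List.getElem_singleton]
      rw [if_neg (by omega), if_neg (by omega)]

section

variable (h : Set.MapsTo (fun (u : ℤ → Fin 3) (i : ℤ) => u (i + 1)) (XX M) (XX M))

lemma iter_val (x : ↥(XX M)) (n : ℕ) (i : ℤ) :
    ((Set.MapsTo.restrict _ _ _ h)^[n] x : ℤ → Fin 3) i = (x : ℤ → Fin 3) (i + n) := by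
  rw [restrict_iterate, shift_iterate]

lemma mem_SS_iff (x : ↥(XX M)) (n : ℕ) (k : Fin 3) :
    (Set.MapsTo.restrict _ _ _ h)^[n] x ∈ SS M k ↔ (x : ℤ → Fin 3) n = k := by
  show ((Set.MapsTo.restrict _ _ _ h)^[n] x : ℤ → Fin 3) 0 = k ↔ _
  rw [iter_val]
  norm_num

lemma wrd_mem_iff (hpos : ∀ k ∈ M, 0 < k) (m : ℕ) :
    wrd M m ∈ genLanguage (Set.MapsTo.restrict _ _ _ h) (alph M) ↔ m ∈ M := by
  constructor
  · rintro ⟨x, hx⟩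
    have h0 : (x : ℤ → Fin 3) 0 = 0 := by
      have := hx ⟨0, by rw [wrd_length]; omega⟩
      rw [wrd_get] at this
      simpa using (mem_SS_iff M h x 0 0).mp this
    have h1 : ∀ j : ℕ, 1 ≤ j → j ≤ m → (x : ℤ → Fin 3) j = 1 := by
      intro j hj1 hj2
      have := hx ⟨j, by rw [wrd_length]; omega⟩
      rw [wrd_get] at this
      rw [if_neg (by omega), if_pos hj2] at this
      exact (mem_SS_iff M h x j 1).mp this
    have h2 : (x : ℤ → Fin 3) (m + 1) = 2 := by
      have := hx ⟨m + 1, by rw [wrd_length]; omega⟩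
      rw [wrd_get] at this
      rw [if_neg (by omega), if_neg (by omega)] at this
      have := (mem_SS_iff M h x (m + 1) 2).mp this
      simpa using this
    obtain ⟨-, hblock⟩ := x.2
    refine hblock 0 m (by simpa using h0) (fun j hj1 hj2 => by simpa using h1 j hj1 hj2) ?_
    simpa using h2
  · intro hm
    refine ⟨⟨_, step_mem_XX M hpos hm⟩, ?_⟩
    rintro ⟨i, hi⟩
    rw [wrd_get]
    rw [wrd_length] at hi
    split_ifs with hc1 hc2
    · subst hc1
      refine (mem_SS_iff M h _ _ _).mpr ?_
      simp
    · refine (mem_SS_iff M h _ _ _).mpr ?_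
      show (if (i : ℤ) ≤ 0 then (0 : Fin 3) else if (i : ℤ) ≤ (m : ℤ) then 1 else 2) = 1
      rw [if_neg (by omega), if_pos (by omega)]
    · have : i = m + 1 := by omega
      subst this
      refine (mem_SS_iff M h _ _ _).mpr ?_
      show (if ((m + 1 : ℕ) : ℤ) ≤ 0 then (0 : Fin 3) else
        if ((m + 1 : ℕ) : ℤ) ≤ (m : ℤ) then 1 else 2) = 2
      rw [if_neg (by push_cast; omega), if_neg (by push_cast; omega)]

end

lemma gen_not_regular (hpos : ∀ k ∈ M, 0 < k)
    (hM : ¬ Language.IsRegular {w : List Unit | w.length ∈ M})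
    (h : Set.MapsTo (fun (u : ℤ → Fin 3) (i : ℤ) => u (i + 1)) (XX M) (XX M)) :
    ¬ (genLanguage (Set.MapsTo.restrict _ _ _ h) (alph M)).IsRegular := by
  rintro ⟨σ, inst, D, hD⟩
  apply hM
  refine ⟨σ, inst, ⟨fun q _ => D.step q (ltr M 1), D.step D.start (ltr M 0),
    {q | D.step q (ltr M 2) ∈ D.accept}⟩, ?_⟩
  set D' : DFA Unit σ := ⟨fun q _ => D.step q (ltr M 1), D.step D.start (ltr M 0),
    {q | D.step q (ltr M 2) ∈ D.accept}⟩ with hD'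
  have key : ∀ (w : List Unit) (s : σ),
      D'.evalFrom s w = D.evalFrom s (List.replicate w.length (ltr M 1)) := by
    intro w
    induction w with
    | nil => intro s; rfl
    | cons a w ih =>
      intro s
      show D'.evalFrom (D'.step s a) w = _
      rw [ih, List.length_cons, List.replicate_succ]
      rfl
  ext w
  have hw : wrd M w.length ∈ D.accepts ↔
      D.step (D.evalFrom (D.step D.start (ltr M 0)) (List.replicate w.length (ltr M 1)))
        (ltr M 2) ∈ D.accept := by
    rw [DFA.mem_accepts]
    have he : D.eval (wrd M w.length) =
        D.step (D.evalFrom (D.step D.start (ltr M 0)) (List.replicate w.length (ltr M 1)))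
          (ltr M 2) := by
      show D.evalFrom (D.step D.start (ltr M 0))
        (List.replicate w.length (ltr M 1) ++ [ltr M 2]) = _
      rw [DFA.evalFrom_append_singleton]
    rw [he]
  have hm : wrd M w.length ∈ D.accepts ↔ w.length ∈ M := by
    rw [hD]; exact wrd_mem_iff M h hpos _
  rw [DFA.mem_accepts]
  show D.step (D'.evalFrom D'.start w) (ltr M 2) ∈ D.accept ↔ w.length ∈ M
  rw [key]
  show D.step (D.evalFrom (D.step D.start (ltr M 0)) (List.replicate w.length (ltr M 1)))
    (ltr M 2) ∈ D.accept ↔ w.length ∈ M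
  rw [← hw]
  exact hm


section Disc
variable {A Q B : Type} [Fintype A] [Fintype Q] [Fintype B]
  [Nonempty A] [Nonempty Q] [Nonempty B]

abbrev Sig (A Q B : Type) : Type := A ⊕ Q ⊕ B

lemma state_spec (u : Discontinuum A Q B) : u.1 0 = Sum.inr (Sum.inl u.state) :=
  u.2.2.1.choose_spec

lemma input_spec (u : Discontinuum A Q B) : u.1 1 = Sum.inl u.input :=
  (u.2.1 1 one_pos).choose_spec

lemma state_congr {u v : Discontinuum A Q B} (h : u.1 0 = v.1 0) : u.state = v.state := by
  have h1 := state_spec u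
  have h2 := state_spec v
  rw [h1, h2] at h
  simpa using h

lemma input_congr {u v : Discontinuum A Q B} (h : u.1 1 = v.1 1) : u.input = v.input := by
  have h1 := input_spec u
  have h2 := input_spec v
  rw [h1, h2] at h
  simpa using h

variable (fA : Q × A → Q) (fB : Q → B)

lemma autMap_val_neg (u : Discontinuum A Q B) :
    (autMap fA fB u).1 (-1) = Sum.inr (Sum.inr (fB u.state)) := by
  simp [autMap]

lemma autMap_val_zero (u : Discontinuum A Q B) :
    (autMap fA fB u).1 0 = Sum.inr (Sum.inl (fA (u.state, u.input))) := by
  simp [autMap]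

lemma autMap_val (u : Discontinuum A Q B) (j : ℤ) (h1 : j ≠ -1) (h2 : j ≠ 0) :
    (autMap fA fB u).1 j = u.1 (j + 1) := by
  simp only [autMap]
  rw [if_neg h1, if_neg h2]

lemma autMap_agree {u v : Discontinuum A Q B} {L K : ℤ} (hL : L ≤ 0) (hK : 1 ≤ K)
    (h : ∀ j : ℤ, L ≤ j → j ≤ K → u.1 j = v.1 j) :
    ∀ j : ℤ, L ≤ j → j ≤ K - 1 → (autMap fA fB u).1 j = (autMap fA fB v).1 j := by
  intro j hj1 hj2
  rcases eq_or_ne j (-1) with rfl | hne1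
  · rw [autMap_val_neg, autMap_val_neg, state_congr (h 0 hL (by omega))]
  rcases eq_or_ne j 0 with rfl | hne0
  · rw [autMap_val_zero, autMap_val_zero, state_congr (h 0 hL (by omega)),
      input_congr (h 1 (by omega) (by omega))]
  · rw [autMap_val _ _ _ j hne1 hne0, autMap_val _ _ _ j hne1 hne0]
    exact h (j + 1) (by omega) (by omega)

lemma autMap_iter_agree {u v : Discontinuum A Q B} {L K : ℤ} (hL : L ≤ 0)
    (h : ∀ j : ℤ, L ≤ j → j ≤ K → u.1 j = v.1 j) :
    ∀ n : ℕ, (n : ℤ) ≤ K → ∀ j : ℤ, L ≤ j → j ≤ K - n →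
      ((autMap fA fB)^[n] u).1 j = ((autMap fA fB)^[n] v).1 j := by
  intro n
  induction n generalizing u v K with
  | zero => intro _ j h1 h2; exact h j h1 (by omega)
  | succ n ih =>
    intro hn j hj1 hj2
    rw [Function.iterate_succ_apply, Function.iterate_succ_apply]
    have step := autMap_agree fA fB hL (by omega : (1:ℤ) ≤ K) h
    exact ih (K := K - 1) step (by push_cast at hn ⊢; omega) j hj1 (by push_cast at hj2 ⊢; omega)

lemma autMap_iter_pos (z : Discontinuum A Q B) (n : ℕ) (j : ℤ) (hj : 1 ≤ j) :
    ((autMap fA fB)^[n] z).1 j = z.1 (j + n) := by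
  induction n generalizing j with
  | zero => simp
  | succ n ih =>
    have hidx : j + ((n + 1 : ℕ) : ℤ) = j + 1 + (n : ℤ) := by push_cast; ring
    rw [Function.iterate_succ_apply', autMap_val _ _ _ j (by omega) (by omega),
      ih (j + 1) (by omega), hidx]

end Disc

section DiscTop
variable {A Q B : Type} [Fintype A] [Fintype Q] [Fintype B]
  [Nonempty A] [Nonempty Q] [Nonempty B]

lemma disc_nonempty : Nonempty (Discontinuum A Q B) := by
  inhabit A; inhabit Q; inhabit B
  refine ⟨⟨fun i => if 0 < i then Sum.inl default
    else if i = 0 then Sum.inr (Sum.inl default) else Sum.inr (Sum.inr default), ?_, ?_, ?_⟩⟩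
  · intro i hi
    refine ⟨default, ?_⟩
    beta_reduce
    rw [if_pos hi]
  · refine ⟨default, ?_⟩
    beta_reduce
    rw [if_neg (by omega), if_pos rfl]
  · intro i hi
    refine ⟨default, ?_⟩
    beta_reduce
    rw [if_neg (by omega), if_neg (by omega)]

lemma disc_compact : CompactSpace (Discontinuum A Q B) := by
  letI : TopologicalSpace (A ⊕ Q ⊕ B) := ⊥
  haveI : DiscreteTopology (A ⊕ Q ⊕ B) := ⟨rfl⟩
  have hcl : IsClosed {u : ℤ → A ⊕ Q ⊕ B |
      (∀ i : ℤ, 0 < i → ∃ a : A, u i = Sum.inl a) ∧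
      (∃ q : Q, u 0 = Sum.inr (Sum.inl q)) ∧
      (∀ i : ℤ, i < 0 → ∃ b : B, u i = Sum.inr (Sum.inr b))} := by
    have e : {u : ℤ → A ⊕ Q ⊕ B |
        (∀ i : ℤ, 0 < i → ∃ a : A, u i = Sum.inl a) ∧
        (∃ q : Q, u 0 = Sum.inr (Sum.inl q)) ∧
        (∀ i : ℤ, i < 0 → ∃ b : B, u i = Sum.inr (Sum.inr b))}
        = (⋂ i : ℤ, ⋂ _ : 0 < i,
            (fun u : ℤ → A ⊕ Q ⊕ B => u i) ⁻¹' {s | ∃ a : A, s = Sum.inl a})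
          ∩ (((fun u : ℤ → A ⊕ Q ⊕ B => u 0) ⁻¹' {s | ∃ q : Q, s = Sum.inr (Sum.inl q)})
          ∩ ⋂ i : ℤ, ⋂ _ : i < 0,
            (fun u : ℤ → A ⊕ Q ⊕ B => u i) ⁻¹' {s | ∃ b : B, s = Sum.inr (Sum.inr b)}) := by
      ext u
      simp [Set.mem_iInter]
    rw [e]
    refine IsClosed.inter ?_ (IsClosed.inter ?_ ?_)
    · exact isClosed_iInter fun i => isClosed_iInter fun _ =>
        (isClosed_discrete _).preimage (continuous_apply i)
    · exact (isClosed_discrete _).preimage (continuous_apply 0)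
    · exact isClosed_iInter fun i => isClosed_iInter fun _ =>
        (isClosed_discrete _).preimage (continuous_apply i)
  exact isCompact_iff_compactSpace.mp hcl.isCompact

lemma uniform_radius (g : Discontinuum A Q B → Fin 3) (hg : Continuous g) :
    ∃ N : ℕ, ∀ z z' : Discontinuum A Q B,
      (∀ j : ℤ, |j| ≤ (N : ℤ) → z.1 j = z'.1 j) → g z = g z' := by
  haveI := disc_compact (A := A) (Q := Q) (B := B)
  by_contra hcon
  push_neg at hcon
  letI : TopologicalSpace (A ⊕ Q ⊕ B) := ⊥
  haveI : DiscreteTopology (A ⊕ Q ⊕ B) := ⟨rfl⟩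
  set K : ℕ → Set (Discontinuum A Q B × Discontinuum A Q B) := fun N =>
    {p | (∀ j : ℤ, |j| ≤ (N : ℤ) → p.1.1 j = p.2.1 j) ∧ g p.1 ≠ g p.2} with hK
  have hclosed : ∀ N, IsClosed (K N) := by
    intro N
    have e : K N = (⋂ j : ℤ, ⋂ _ : |j| ≤ (N : ℤ),
        (fun p : Discontinuum A Q B × Discontinuum A Q B => (p.1.1 j, p.2.1 j)) ⁻¹'
          {s : (A ⊕ Q ⊕ B) × (A ⊕ Q ⊕ B) | s.1 = s.2})
        ∩ (fun p : Discontinuum A Q B × Discontinuum A Q B => (g p.1, g p.2)) ⁻¹'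
          {s : Fin 3 × Fin 3 | s.1 ≠ s.2} := by
      ext p
      simp [hK, Set.mem_iInter]
    rw [e]
    refine IsClosed.inter ?_ ?_
    · exact isClosed_iInter fun j => isClosed_iInter fun _ =>
        (isClosed_discrete _).preimage
          ((((continuous_apply j).comp continuous_subtype_val).comp continuous_fst).prodMk
            (((continuous_apply j).comp continuous_subtype_val).comp continuous_snd))
    · exact (isClosed_discrete _).preimage
        ((hg.comp continuous_fst).prodMk (hg.comp continuous_snd))
  have hne : ∀ N, (K N).Nonempty := by
    intro N
    obtain ⟨z, z', h1, h2⟩ := hcon N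
    exact ⟨(z, z'), h1, h2⟩
  have hmono : ∀ N, K (N + 1) ⊆ K N := by
    intro N p hp
    exact ⟨fun j hj => hp.1 j (le_trans hj (by push_cast; omega)), hp.2⟩
  have hint : (⋂ N, K N).Nonempty :=
    IsCompact.nonempty_iInter_of_sequence_nonempty_isCompact_isClosed K hmono hne
      ((hclosed 0).isCompact) hclosed
  obtain ⟨⟨z, z'⟩, hz⟩ := hint
  simp only [Set.mem_iInter] at hz
  have : z = z' := by
    apply Subtype.ext
    funext j
    exact (hz j.natAbs).1 j (le_of_eq (Int.abs_eq_natAbs j))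
  exact (hz 0).2 (this ▸ rfl)

end DiscTop

section NFAsec
variable {A Q B : Type} [Fintype A] [Fintype Q] [Fintype B]
  [Nonempty A] [Nonempty Q] [Nonempty B]
variable {C : Type}

def Win (N : ℕ) (z : Discontinuum A Q B) :
    ↥(Finset.Icc (-(N : ℤ)) (N : ℤ)) → A ⊕ Q ⊕ B := fun j => z.1 j.1

def autNFA (fA : Q × A → Q) (fB : Q → B) (P : Discontinuum A Q B → C) (N : ℕ) :
    NFA C (↥(Finset.Icc (-(N : ℤ)) (N : ℤ)) → A ⊕ Q ⊕ B) where
  step w c := {w' | ∃ v : Discontinuum A Q B,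
    Win N v = w ∧ Win N (autMap fA fB v) = w' ∧ P v = c}
  start := Set.range (Win N)
  accept := Set.univ

variable (fA : Q × A → Q) (fB : Q → B) (P : Discontinuum A Q B → C) (N : ℕ)

lemma autNFA_fwd : ∀ (w : List C) (S : Set (↥(Finset.Icc (-(N : ℤ)) (N : ℤ)) → A ⊕ Q ⊕ B))
    (z : Discontinuum A Q B), Win N z ∈ S →
    (∀ i : Fin w.length, P ((autMap fA fB)^[(i : ℕ)] z) = w.get i) →
    Win N ((autMap fA fB)^[w.length] z) ∈ (autNFA fA fB P N).evalFrom S w := by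
  intro w
  induction w with
  | nil => intro S z hz _; exact hz
  | cons c w ih =>
    intro S z hz hit
    show Win N ((autMap fA fB)^[(c :: w).length] z) ∈
      (autNFA fA fB P N).evalFrom ((autNFA fA fB P N).stepSet S c) w
    have h0 : P z = c := hit ⟨0, by simp⟩
    have hstep : Win N (autMap fA fB z) ∈ (autNFA fA fB P N).stepSet S c :=
      NFA.mem_stepSet.mpr ⟨Win N z, hz, z, rfl, rfl, h0⟩
    have hit' : ∀ i : Fin w.length,
        P ((autMap fA fB)^[(i : ℕ)] (autMap fA fB z)) = w.get i := by
      rintro ⟨i, hi⟩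
      have := hit ⟨i + 1, by simp only [List.length_cons]; omega⟩
      rw [← Function.iterate_succ_apply]
      simp only [List.get_eq_getElem] at this ⊢
      rwa [List.getElem_cons_succ] at this
    have := ih ((autNFA fA fB P N).stepSet S c) (autMap fA fB z) hstep hit'
    rwa [List.length_cons, Function.iterate_succ_apply]

lemma autNFA_bwd : ∀ (w : List C) (q : ↥(Finset.Icc (-(N : ℤ)) (N : ℤ)) → A ⊕ Q ⊕ B),
    (hN : ∀ z z' : Discontinuum A Q B,
      (∀ j : ℤ, |j| ≤ (N : ℤ) → z.1 j = z'.1 j) → P z = P z') →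
    q ∈ (autNFA fA fB P N).evalFrom (Set.range (Win N)) w →
    ∃ z : Discontinuum A Q B, (∀ i : Fin w.length, P ((autMap fA fB)^[(i : ℕ)] z) = w.get i) ∧
      Win N ((autMap fA fB)^[w.length] z) = q := by
  intro w
  induction w using List.reverseRecOn with
  | nil =>
    rintro q hN ⟨z, rfl⟩
    exact ⟨z, fun i => absurd i.2 (by simp), rfl⟩
  | append_singleton w c ih =>
    intro q hN hq
    rw [NFA.evalFrom_append, NFA.evalFrom_singleton, NFA.mem_stepSet] at hq
    obtain ⟨p, hp, v, hv1, hv2, hv3⟩ := hq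
    obtain ⟨z, hit, hwin⟩ := ih p hN hp
    set n := w.length with hn
    set zv : Discontinuum A Q B := ⟨fun j => if j ≤ (N : ℤ) + n then z.1 j else v.1 (j - n),
      by
        refine ⟨fun j hj => ?_, ?_, fun j hj => ?_⟩
        · beta_reduce
          by_cases hc : j ≤ (N : ℤ) + n
          · rw [if_pos hc]; exact z.2.1 j hj
          · rw [if_neg hc]; exact v.2.1 (j - n) (by omega)
        · beta_reduce
          rw [if_pos (by positivity)]
          exact z.2.2.1
        · beta_reduce
          rw [if_pos (by omega)]
          exact z.2.2.2 j hj⟩ with hzv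
    have hA1 : ∀ j : ℤ, j ≤ (N : ℤ) + n → zv.1 j = z.1 j := by
      intro j hj
      show (if j ≤ (N : ℤ) + n then z.1 j else v.1 (j - n)) = z.1 j
      rw [if_pos hj]
    have hA2 : ∀ j : ℤ, (N : ℤ) + n < j → zv.1 j = v.1 (j - n) := by
      intro j hj
      show (if j ≤ (N : ℤ) + n then z.1 j else v.1 (j - n)) = v.1 (j - n)
      rw [if_neg (by omega)]
    have agr : ∀ i : ℕ, i ≤ n → ∀ j : ℤ, -(N : ℤ) ≤ j → j ≤ (N : ℤ) + n - i →
        ((autMap fA fB)^[i] zv).1 j = ((autMap fA fB)^[i] z).1 j := by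
      intro i hi
      exact autMap_iter_agree (L := -(N : ℤ)) (K := (N : ℤ) + n) fA fB (by omega)
        (fun j h1 h2 => hA1 j h2) i (by omega)
    have hit' : ∀ i : Fin n, P ((autMap fA fB)^[(i : ℕ)] zv) = w.get i := by
      rintro ⟨i, hi⟩
      rw [← hit ⟨i, hi⟩]
      refine hN _ _ fun j hj => ?_
      rw [abs_le] at hj
      exact agr i (by omega) j (by omega) (by omega)
    have hwv : Win N ((autMap fA fB)^[n] z) = Win N v := hwin.trans hv1.symm
    have hfull : ∀ j : ℤ, -(N : ℤ) ≤ j → j ≤ (N : ℤ) + 1 →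
        ((autMap fA fB)^[n] zv).1 j = v.1 j := by
      intro j h1 h2
      rcases le_or_gt j (N : ℤ) with hc | hc
      · rw [agr n le_rfl j h1 (by omega)]
        have := congrFun hwv ⟨j, by rw [Finset.mem_Icc]; omega⟩
        exact this
      · have hj : j = (N : ℤ) + 1 := by omega
        subst hj
        rw [autMap_iter_pos fA fB zv n ((N : ℤ) + 1) (by omega),
          hA2 ((N : ℤ) + 1 + n) (by omega),
          show (N : ℤ) + 1 + (n : ℤ) - (n : ℤ) = (N : ℤ) + 1 by omega]
    have hcolor : P ((autMap fA fB)^[n] zv) = c := by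
      rw [← hv3]
      refine hN _ _ fun j hj => ?_
      rw [abs_le] at hj
      exact hfull j (by omega) (by omega)
    have hfinwin : Win N ((autMap fA fB)^[n + 1] zv) = q := by
      rw [Function.iterate_succ_apply', ← hv2]
      funext j
      exact autMap_agree (L := -(N : ℤ)) (K := (N : ℤ) + 1) fA fB (by omega) (by omega)
        hfull j.1 (by have := j.2; rw [Finset.mem_Icc] at this; omega)
        (by have := j.2; rw [Finset.mem_Icc] at this; omega)
    refine ⟨zv, ?_, ?_⟩
    · rintro ⟨i, hi⟩
      simp only [List.length_append, List.length_singleton] at hi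
      rcases Nat.lt_or_ge i n with hc | hc
      · simp only [List.get_eq_getElem]
        rw [List.getElem_append_left (by omega)]
        have := hit' ⟨i, hc⟩
        simpa using this
      · have hin : i = n := by omega
        simp only [List.get_eq_getElem, hin]
        rw [List.getElem_append_right (by omega)]
        simpa [hn] using hcolor
    · rw [List.length_append, List.length_singleton]
      exact hfinwin

lemma lang_regular
    (hN : ∀ z z' : Discontinuum A Q B,
      (∀ j : ℤ, |j| ≤ (N : ℤ) → z.1 j = z'.1 j) → P z = P z') :
    Language.IsRegular {w : List C |
      ∃ z : Discontinuum A Q B, ∀ i : Fin w.length, P ((autMap fA fB)^[(i : ℕ)] z) = w.get i} := by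
  classical
  refine ⟨Set (↥(Finset.Icc (-(N : ℤ)) (N : ℤ)) → A ⊕ Q ⊕ B), inferInstance,
    (autNFA fA fB P N).toDFA, ?_⟩
  rw [NFA.toDFA_correct]
  ext w
  rw [NFA.mem_accepts]
  constructor
  · rintro ⟨S, -, hS⟩
    obtain ⟨z, hitin, -⟩ := autNFA_bwd fA fB P N w S hN hS
    exact ⟨z, hitin⟩
  · rintro ⟨z, hitin⟩
    exact ⟨_, Set.mem_univ _, autNFA_fwd fA fB P N w _ z ⟨z, rfl⟩ hitin⟩

end NFAsec


lemma mono_le {x : ℤ → Fin 3} (hx : ∀ i j : ℤ, i < j → x i ≤ x j)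
    {i j : ℤ} (h : i ≤ j) : x i ≤ x j := by
  rcases eq_or_lt_of_le h with h | h
  · exact h ▸ le_refl _
  · exact hx _ _ h

lemma eventually_const {x : ℤ → Fin 3} (hx : ∀ i j : ℤ, i < j → x i ≤ x j) :
    ∃ (c : Fin 3) (n0 : ℕ), ∀ j : ℤ, (n0 : ℤ) ≤ j → x j = c := by
  obtain ⟨v, ⟨n0, hv⟩, hmax⟩ := Set.Finite.exists_maximalFor id (Set.range fun n : ℕ => x n)
    (Set.toFinite _) ⟨x 0, 0, rfl⟩
  simp only [id] at hmax
  have hub : ∀ m : ℕ, x m ≤ v := by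
    intro m
    rcases le_total (x m) v with h | h
    · exact h
    · exact hmax ⟨m, rfl⟩ h
  refine ⟨v, n0, fun j hj => ?_⟩
  have h1 : v ≤ x j := hv ▸ mono_le hx hj
  have h2 : x j ≤ v := by
    have hj0 : (0:ℤ) ≤ j := le_trans (Int.ofNat_nonneg n0) hj
    have : x j ≤ x ((j.toNat + 1 : ℕ) : ℤ) := mono_le hx (by omega)
    exact this.trans (hub _)
  exact le_antisymm h2 h1

lemma omega_single {x : ℤ → Fin 3} {c : Fin 3} {n0 : ℕ}
    (hc : ∀ j : ℤ, (n0 : ℤ) ≤ j → x j = c) :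
    omegaSet (fun (u : ℤ → Fin 3) (i : ℤ) => u (i + 1)) {x} = {fun _ => c} := by
  apply Set.Subset.antisymm
  · intro y hy
    simp only [omegaSet, Set.mem_iInter] at hy
    have : y = fun _ => c := by
      funext i
      by_contra hne
      have h := hy (n0 + i.natAbs)
      rw [mem_closure_iff] at h
      obtain ⟨z, hz1, hz2⟩ := h ((fun z : ℤ → Fin 3 => z i) ⁻¹' {y i})
        ((isOpen_discrete {y i}).preimage (continuous_apply i)) rfl
      simp only [Set.mem_iUnion, Set.image_singleton, Set.mem_singleton_iff] at hz2
      obtain ⟨m, hm, rfl⟩ := hz2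
      have : x (i + m) = c := hc _ (by omega)
      rw [Set.mem_preimage, Set.mem_singleton_iff, shift_iterate, this] at hz1
      exact hne hz1.symm
    exact this
  · intro y hy
    rw [Set.mem_singleton_iff] at hy
    subst hy
    simp only [omegaSet, Set.mem_iInter]
    intro n
    apply mem_closure_of_tendsto
      (f := fun m : ℕ => (fun (u : ℤ → Fin 3) (i : ℤ) => u (i + 1))^[m] x) (b := Filter.atTop)
    · rw [tendsto_pi_nhds]
      intro i
      apply Filter.Tendsto.congr' ?_ (tendsto_const_nhds (x := c))
      filter_upwards [Filter.eventually_ge_atTop (n0 + i.natAbs)] with m hm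
      rw [shift_iterate]
      exact (hc _ (by omega)).symm
    · filter_upwards [Filter.eventually_gt_atTop n] with m hm
      exact Set.mem_iUnion.2 ⟨m, Set.mem_iUnion.2 ⟨hm, x, rfl, rfl⟩⟩


lemma factor_gen_regular
    (h : Set.MapsTo (fun (u : ℤ → Fin 3) (i : ℤ) => u (i + 1)) (XX M) (XX M))
    (hfac : IsFactorOfFiniteAutomaton (Set.MapsTo.restrict _ _ _ h)) :
    (genLanguage (Set.MapsTo.restrict _ _ _ h) (alph M)).IsRegular := by
  obtain ⟨A, Q, B, finA, finQ, finB, neA, neQ, neB, fA, fB, φ, hcont, hsurj, hcomm⟩ := hfac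
  haveI := finA; haveI := finQ; haveI := finB
  haveI := neA; haveI := neQ; haveI := neB
  set F := Set.MapsTo.restrict (fun (u : ℤ → Fin 3) (i : ℤ) => u (i + 1)) (XX M) (XX M) h
    with hF
  have hiter : ∀ (n : ℕ) (z : Discontinuum A Q B),
      φ ((autMap fA fB)^[n] z) = F^[n] (φ z) := by
    intro n
    induction n with
    | zero => intro z; rfl
    | succ n ih =>
      intro z
      calc φ ((autMap fA fB)^[n + 1] z) = φ ((autMap fA fB)^[n] (autMap fA fB z)) := by
            rw [Function.iterate_succ_apply]
        _ = F^[n] (φ (autMap fA fB z)) := ih _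
        _ = F^[n] (F (φ z)) := by
            have e : F (φ z) = φ (autMap fA fB z) := congrFun hcomm z
            rw [← e]
        _ = F^[n + 1] (φ z) := (Function.iterate_succ_apply F n (φ z)).symm
  set g : Discontinuum A Q B → Fin 3 := fun z => (φ z).1 0 with hg
  have hgc : Continuous g := ((continuous_apply (0 : ℤ)).comp continuous_subtype_val).comp hcont
  obtain ⟨N, hN⟩ := uniform_radius g hgc
  set P : Discontinuum A Q B → ↥(alph M) := fun z => ltr M (g z) with hP
  have hNP : ∀ z z' : Discontinuum A Q B,
      (∀ j : ℤ, |j| ≤ (N : ℤ) → z.1 j = z'.1 j) → P z = P z' := by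
    intro z z' hj
    simp only [hP]
    rw [hN z z' hj]
  have hlang : genLanguage F (alph M) = {w : List ↥(alph M) |
      ∃ z : Discontinuum A Q B, ∀ i : Fin w.length, P ((autMap fA fB)^[(i : ℕ)] z) = w.get i} := by
    ext w
    constructor
    · rintro ⟨x, hx⟩
      obtain ⟨z, rfl⟩ := hsurj x
      refine ⟨z, fun i => ?_⟩
      obtain ⟨k, hk⟩ := (w.get i).2
      have hxi := hx i
      rw [← hk] at hxi
      have hval : (F^[(i : ℕ)] (φ z)).1 0 = k := hxi
      apply Subtype.ext
      show SS M (g ((autMap fA fB)^[(i : ℕ)] z)) = ((w.get i) : Set ↥(XX M))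
      rw [← hk]
      rw [show g ((autMap fA fB)^[(i : ℕ)] z) = k from by
        show (φ ((autMap fA fB)^[(i : ℕ)] z)).1 0 = k
        rw [hiter]
        exact hval]
    · rintro ⟨z, hz⟩
      refine ⟨φ z, fun i => ?_⟩
      rw [← hz i]
      show F^[(i : ℕ)] (φ z) ∈ SS M (g ((autMap fA fB)^[(i : ℕ)] z))
      rw [← hiter]
      exact rfl
  rw [hlang]
  exact lang_regular fA fB P N hNP


end AuxShift

/-- There is a dynamical system in which the ω-limit set of every point is a fixed
point, but which is not a factor of any finite automaton: take a nonregular set `M`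
of positive integers and the subshift of nondecreasing sequences over `{0,1,2}`
whose blocks `0 1^m 2` all have `m ∈ M`. -/
theorem fixed_limits_not_factor (M : Set ℕ) (hpos : ∀ m ∈ M, 0 < m)
    (hM : ¬ Language.IsRegular {w : List Unit | w.length ∈ M})
    (X : Set (ℤ → Fin 3))
    (hX : X = {u : ℤ → Fin 3 | (∀ i j : ℤ, i < j → u i ≤ u j) ∧
      ∀ (i : ℤ) (m : ℕ), u i = 0 → (∀ j : ℕ, 1 ≤ j → j ≤ m → u (i + (j : ℤ)) = 1) →
        u (i + (m : ℤ) + 1) = 2 → m ∈ M}) :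
    IsClosed X ∧
    ∃ h : Set.MapsTo (fun (u : ℤ → Fin 3) (i : ℤ) => u (i + 1)) X X,
      (∀ x ∈ X, ∃ c : Fin 3,
        (fun (u : ℤ → Fin 3) (i : ℤ) => u (i + 1)) (fun _ => c) = (fun _ => c) ∧
        omegaSet (fun (u : ℤ → Fin 3) (i : ℤ) => u (i + 1)) {x} = {fun _ => c}) ∧
      ¬ ClopenRegular (Set.MapsTo.restrict _ _ _ h) ∧
      ¬ IsFactorOfFiniteAutomaton (Set.MapsTo.restrict _ _ _ h) := by
  have hXX : X = XX M := hX
  clear hX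
  subst hXX
  refine ⟨isClosed_XX M, mapsTo_XX M, ?_, ?_, ?_⟩
  · intro x hx
    obtain ⟨c, n0, hc⟩ := eventually_const hx.1
    exact ⟨c, rfl, omega_single hc⟩
  · intro hcr
    refine gen_not_regular M hpos hM (mapsTo_XX M) ?_
    refine hcr (alph M) (Set.finite_range _) ?_ ?_
    · rintro S ⟨k, rfl⟩
      exact (isClopen_discrete {k}).preimage ((continuous_apply (0 : ℤ)).comp
        continuous_subtype_val)
    · ext x
      simp only [Set.mem_sUnion, Set.mem_univ, iff_true]
      exact ⟨SS M (x.1 0), ⟨x.1 0, rfl⟩, rfl⟩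
  · intro hfac
    exact gen_not_regular M hpos hM (mapsTo_XX M) (factor_gen_regular M (mapsTo_XX M) hfac)
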